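/- Let τ ∈ ℚ with τ ≠ 0 and τ ≠ 1, and suppose that neither τ nor τ⁻¹ is an integer. Let Q_τ be the weighted average quandle on ℚ with operation x ▷ y = τx + (1−τ)y and inverse operation x ◁ y = τ⁻¹x + (1−τ⁻¹)y. Then there exists a ▷-congruence on Q_τ that is not a ◁-congruence, and there exists a ◁-congruence on Q_τ that is not a ▷-congruence. -/

import Mathlib

lemma inv_den_eq (q : ℚ) (hq : q ≠ 0) : q⁻¹.den = q.num.natAbs := by
  rw [Rat.inv_def, Rat.den_divInt]
  have hnum : q.num ≠ 0 := Rat.num_ne_zero.mpr hq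
  rw [if_neg hnum]
  have : Int.gcd (q.den : ℤ) q.num = 1 := by
    have := q.reduced
    simpa [Int.gcd, Nat.coprime_comm] using this.symm
  simp [Int.gcd_comm q.num, this]

-- the relation r a b := ¬ ℓ ∣ (a-b).den is an equivalence for ℓ prime
lemma req (ℓ : ℕ) (hℓ : ℓ.Prime) : Equivalence (fun a b : ℚ => ¬ (ℓ ∣ (a - b).den)) := by
  constructor
  · intro a
    simp only [sub_self]
    intro h
    exact Nat.Prime.one_lt hℓ |>.ne' (Nat.eq_one_of_dvd_one (by simpa using h))
  · intro a b h hd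
    have : b - a = -(a - b) := by ring
    rw [this, Rat.neg_den] at hd; exact h hd
  · intro a b c hab hbc hd
    have : a - c = (a - b) + (b - c) := by ring
    rw [this] at hd
    have := hd.trans (Rat.add_den_dvd _ _)
    rcases (Nat.Prime.dvd_mul hℓ).1 this with h | h
    exacts [hab h, hbc h]

lemma rcong (ℓ : ℕ) (hℓ : ℓ.Prime) (σ : ℚ) (hσ : ¬ ℓ ∣ σ.den) :
    ∀ a b c d : ℚ, ¬ ℓ ∣ (a - c).den → ¬ ℓ ∣ (b - d).den →
      ¬ ℓ ∣ ((σ * a + (1 - σ) * b) - (σ * c + (1 - σ) * d)).den := by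
  intro a b c d hac hbd hd
  have heq : (σ * a + (1 - σ) * b) - (σ * c + (1 - σ) * d)
      = σ * (a - c) + (1 - σ) * (b - d) := by ring
  rw [heq] at hd
  have h1 := hd.trans (Rat.add_den_dvd _ _)
  rcases (Nat.Prime.dvd_mul hℓ).1 h1 with h | h
  · have := h.trans (Rat.mul_den_dvd _ _)
    rcases (Nat.Prime.dvd_mul hℓ).1 this with h2 | h2
    exacts [hσ h2, hac h2]
  · have := h.trans (Rat.mul_den_dvd _ _)
    rcases (Nat.Prime.dvd_mul hℓ).1 this with h2 | h2
    · have h3 : (1 - σ).den ∣ (1:ℚ).den * σ.den := by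
        have : (1 - σ) = 1 + (-σ) := by ring
        rw [this]
        simpa [Rat.neg_den] using Rat.add_den_dvd 1 (-σ)
      have := h2.trans h3
      simp only [Rat.den_ofNat, one_mul] at this
      exact hσ this
    · exact hbd h2

lemma half (τ : ℚ) (hτ0 : τ ≠ 0)
    (hτinvZ : ∀ n : ℤ, τ⁻¹ ≠ (n : ℚ)) :
    (∃ r : ℚ → ℚ → Prop, Equivalence r ∧
      (∀ a b c d : ℚ, r a c → r b d →
        r (τ * a + (1 - τ) * b) (τ * c + (1 - τ) * d)) ∧
      ¬ (∀ a b c d : ℚ, r a c → r b d →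
        r (τ⁻¹ * a + (1 - τ⁻¹) * b) (τ⁻¹ * c + (1 - τ⁻¹) * d))) := by
  -- τ.num.natAbs ≥ 2 since τ⁻¹ is not an integer
  have hnum : τ.num.natAbs ≠ 1 := by
    intro h1
    have hinv : τ⁻¹.den = 1 := by rw [inv_den_eq τ hτ0, h1]
    exact hτinvZ τ⁻¹.num ((Rat.den_eq_one_iff _).mp hinv).symm
  have hnum0 : τ.num.natAbs ≠ 0 := by
    simpa [Int.natAbs_eq_zero] using Rat.num_ne_zero.mpr hτ0
  set ℓ := (τ.num.natAbs).minFac with hℓdef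
  have hℓ : ℓ.Prime := Nat.minFac_prime hnum
  have hℓdvd : ℓ ∣ τ.num.natAbs := Nat.minFac_dvd _
  have hσ : ¬ ℓ ∣ τ.den := by
    intro h
    have := Nat.Coprime.eq_one_of_dvd (Nat.Coprime.coprime_dvd_left hℓdvd τ.reduced) h
    exact hℓ.one_lt.ne' this
  refine ⟨fun a b => ¬ ℓ ∣ (a - b).den, req ℓ hℓ, rcong ℓ hℓ τ hσ, ?_⟩
  intro H
  have h10 : ¬ ℓ ∣ ((1:ℚ) - 0).den := by
    simpa using fun h => hℓ.one_lt.ne' (Nat.eq_one_of_dvd_one h)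
  have h00 : ¬ ℓ ∣ ((0:ℚ) - 0).den := by
    simpa using fun h => hℓ.one_lt.ne' (Nat.eq_one_of_dvd_one h)
  have := H 1 0 0 0 h10 h00
  simp only [mul_one, mul_zero, add_zero, zero_add, sub_zero] at this
  exact this (by rw [inv_den_eq τ hτ0]; exact hℓdvd)

/-- If `τ ∈ ℚ`, `τ ≠ 0, 1`, and neither `τ` nor `τ⁻¹` is an integer, then in
the weighted average quandle on `ℚ` with operation `x ▷ y = τx + (1-τ)y` and
inverse operation `x ◁ y = τ⁻¹x + (1-τ⁻¹)y` there exists a `▷`-congruence that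
is not a `◁`-congruence, and a `◁`-congruence that is not a `▷`-congruence. -/
theorem stmt_18 (τ : ℚ) (hτ0 : τ ≠ 0) (hτ1 : τ ≠ 1)
    (hτZ : ∀ n : ℤ, τ ≠ (n : ℚ)) (hτinvZ : ∀ n : ℤ, τ⁻¹ ≠ (n : ℚ)) :
    (∃ r : ℚ → ℚ → Prop, Equivalence r ∧
      (∀ a b c d : ℚ, r a c → r b d →
        r (τ * a + (1 - τ) * b) (τ * c + (1 - τ) * d)) ∧
      ¬ (∀ a b c d : ℚ, r a c → r b d →
        r (τ⁻¹ * a + (1 - τ⁻¹) * b) (τ⁻¹ * c + (1 - τ⁻¹) * d))) ∧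
    (∃ r : ℚ → ℚ → Prop, Equivalence r ∧
      (∀ a b c d : ℚ, r a c → r b d →
        r (τ⁻¹ * a + (1 - τ⁻¹) * b) (τ⁻¹ * c + (1 - τ⁻¹) * d)) ∧
      ¬ (∀ a b c d : ℚ, r a c → r b d →
        r (τ * a + (1 - τ) * b) (τ * c + (1 - τ) * d))) := by
  have hτinv0 : τ⁻¹ ≠ 0 := inv_ne_zero hτ0
  have h2 := half τ⁻¹ hτinv0 (by simpa [inv_inv] using hτZ)
  rw [inv_inv] at h2
  exact ⟨half τ hτ0 hτinvZ, h2⟩
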